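/- Let ℓ ≥ 3 and let (C_R, C_B) be any bicolored cycle of length ℓ. For every ε > 0 there exists n_0 such that for all n ≥ n_0 the following holds: whenever R and B are simple graphs on a common vertex set of size n with e(R) ≥ (1/2 + ε)·C(n,2) and e(B) ≥ (1/2 + ε)·C(n,2), there is an injective map φ from the vertex set of the cycle to the common vertex set such that every edge of C_R is mapped to an edge of R and every edge of C_B is mapped to an edge of B. -/

import Mathlib

open SimpleGraph Set

set_option linter.unusedSectionVars false
set_option maxHeartbeats 1600000

open Finset

/-- The cycle of length `ℓ` on vertex set `ZMod ℓ`, with edges `{i, i+1}`. -/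
def cycleG (ℓ : ℕ) : SimpleGraph (ZMod ℓ) :=
  SimpleGraph.fromRel (fun u v => v = u + 1)




attribute [local instance] Classical.propDecidable

section Infra

variable {W : Type} [Fintype W]




/-- getVert is injective on indices up to length, for paths. -/
lemma getVert_inj {G : SimpleGraph W} {p q : W} (P : G.Walk p q) (hP : P.IsPath) :
    ∀ i ≤ P.length, ∀ j ≤ P.length, P.getVert i = P.getVert j → i = j := by
  induction P with
  | nil => intro i hi j hj _; simp [SimpleGraph.Walk.length_nil] at hi hj; omega
  | cons h q ih =>
    rename_i u v w hadj
    intro i hi j hj hij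
    rw [SimpleGraph.Walk.cons_isPath_iff] at hP
    match i, j with
    | 0, 0 => rfl
    | 0, (j+1) =>
      exfalso
      apply hP.2
      rw [SimpleGraph.Walk.mem_support_iff_exists_getVert]
      refine ⟨j, ?_, ?_⟩
      · have := hij.symm
        simpa [SimpleGraph.Walk.getVert_cons_succ] using this
      · simp at hj; omega
    | (i+1), 0 =>
      exfalso
      apply hP.2
      rw [SimpleGraph.Walk.mem_support_iff_exists_getVert]
      refine ⟨i, ?_, ?_⟩
      · simpa [SimpleGraph.Walk.getVert_cons_succ] using hij
      · simp at hi; omega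
    | (i+1), (j+1) =>
      have := ih hP.1 i (by simp at hi; omega) j (by simp at hj; omega)
        (by simpa [SimpleGraph.Walk.getVert_cons_succ] using hij)
      omega

lemma isPath_concat {G : SimpleGraph W} {p q z : W} (P : G.Walk p q) (hP : P.IsPath)
    (h : G.Adj q z) (hz : z ∉ P.support) : (P.concat h).IsPath := by
  rw [← SimpleGraph.Walk.isPath_reverse_iff, SimpleGraph.Walk.reverse_concat]
  apply SimpleGraph.Walk.IsPath.cons
  · rwa [SimpleGraph.Walk.isPath_reverse_iff]
  · rwa [SimpleGraph.Walk.support_reverse, List.mem_reverse]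





/-- zigzag path in a complete bipartite pair of finsets -/
lemma zigzag {G : SimpleGraph W} :
    ∀ (j : ℕ), 1 ≤ j → ∀ (X Y : Finset W), X.card = j → Y.card = j → Disjoint X Y →
    (∀ x ∈ X, ∀ y ∈ Y, G.Adj x y) → ∀ x ∈ X,
    ∃ y ∈ Y, ∃ P : G.Walk x y, P.IsPath ∧ P.length = 2*j - 1 ∧ ∀ v ∈ P.support, v ∈ X ∪ Y := by
  intro j
  induction j with
  | zero => omega
  | succ j ih =>
    intro _ X Y hX hY hdisj hadj x hx
    by_cases hj : j = 0
    · subst hj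
      have hYne : Y.Nonempty := by rw [← Finset.card_pos, hY]; omega
      obtain ⟨y, hy⟩ := hYne
      refine ⟨y, hy, SimpleGraph.Walk.cons (hadj x hx y hy) SimpleGraph.Walk.nil, ?_, by simp, ?_⟩
      · simp [SimpleGraph.Walk.isPath_def, (hadj x hx y hy).ne]
      · intro v hv
        simp only [SimpleGraph.Walk.support_cons, SimpleGraph.Walk.support_nil, List.mem_cons, List.mem_singleton] at hv
        simp only [Finset.mem_union]
        rcases hv with h | h | h
        · subst h; exact Or.inl hx
        · subst h; exact Or.inr hy
        · simp at h
    · -- j ≥ 1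
      have hYne : Y.Nonempty := by rw [← Finset.card_pos, hY]; omega
      obtain ⟨y', hy'⟩ := hYne
      have hXe : (X.erase x).card = j := by rw [Finset.card_erase_of_mem hx, hX]; omega
      have hXene : (X.erase x).Nonempty := by rw [← Finset.card_pos, hXe]; omega
      obtain ⟨x', hx'⟩ := hXene
      have hYe : (Y.erase y').card = j := by rw [Finset.card_erase_of_mem hy', hY]; omega
      have hdisj' : Disjoint (X.erase x) (Y.erase y') :=
        Finset.disjoint_of_subset_left (Finset.erase_subset _ _)
          (Finset.disjoint_of_subset_right (Finset.erase_subset _ _) hdisj)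
      have hadj' : ∀ a ∈ X.erase x, ∀ b ∈ Y.erase y', G.Adj a b := fun a ha b hb =>
        hadj a (Finset.mem_of_mem_erase ha) b (Finset.mem_of_mem_erase hb)
      obtain ⟨y, hy, P', hP', hlen', hsupp'⟩ :=
        ih (by omega) (X.erase x) (Y.erase y') hXe hYe hdisj' hadj' x' hx'
      have hxy' : G.Adj x y' := hadj x hx y' hy'
      have hy'x' : G.Adj y' x' := (hadj x' (Finset.mem_of_mem_erase hx') y' hy').symm
      -- new walk : x - y' - x' - ... - y
      have hy'nP : y' ∉ P'.support := fun h => by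
        rcases Finset.mem_union.mp (hsupp' y' h) with h' | h'
        · exact Finset.disjoint_left.mp hdisj (Finset.mem_of_mem_erase h') hy'
        · exact (Finset.notMem_erase y' Y) h'
      have hxnP : x ∉ P'.support := fun h => by
        rcases Finset.mem_union.mp (hsupp' x h) with h' | h'
        · exact (Finset.notMem_erase x X) h'
        · exact Finset.disjoint_left.mp hdisj hx (Finset.mem_of_mem_erase h')
      have hxny' : x ≠ y' := hxy'.ne
      refine ⟨y, Finset.mem_of_mem_erase hy,
        SimpleGraph.Walk.cons hxy' (SimpleGraph.Walk.cons hy'x' P'), ?_, ?_, ?_⟩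
      · apply SimpleGraph.Walk.IsPath.cons
        · exact SimpleGraph.Walk.IsPath.cons hP' hy'nP
        · simp only [SimpleGraph.Walk.support_cons, List.mem_cons]
          push_neg
          exact ⟨hxny', hxnP⟩
      · simp only [SimpleGraph.Walk.length_cons, hlen']; omega
      · intro v hv
        simp only [SimpleGraph.Walk.support_cons, List.mem_cons] at hv
        simp only [Finset.mem_union]
        rcases hv with h | h | h
        · subst h; exact Or.inl hx
        · subst h; exact Or.inr hy'
        · rcases Finset.mem_union.mp (hsupp' v h) with h' | h'
          · exact Or.inl (Finset.mem_of_mem_erase h')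
          · exact Or.inr (Finset.mem_of_mem_erase h')





lemma kst_pigeon (G : SimpleGraph W) (t : ℕ) (ht : 1 ≤ t)
    (h : (t-1) * (Fintype.card W).choose t < ∑ v : W, (G.degree v).choose t) :
    ∃ X Y : Finset W, X.card = t ∧ Y.card = t ∧ Disjoint X Y ∧
      ∀ x ∈ X, ∀ y ∈ Y, G.Adj x y := by
  classical
  have key : ∑ v : W, (G.degree v).choose t
      = ∑ T ∈ (Finset.univ : Finset W).powersetCard t,
          ((Finset.univ.filter (fun v => T ⊆ G.neighborFinset v)).card) := by
    have h1 : ∀ v : W, (G.degree v).choose t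
        = (((Finset.univ : Finset W).powersetCard t).filter
            (fun T => T ⊆ G.neighborFinset v)).card := by
      intro v
      rw [← SimpleGraph.card_neighborFinset_eq_degree, ← Finset.card_powersetCard]
      congr 1
      ext T
      simp only [Finset.mem_powersetCard, Finset.mem_filter]
      constructor
      · rintro ⟨hsub, hc⟩; exact ⟨⟨Finset.subset_univ _, hc⟩, hsub⟩
      · rintro ⟨⟨_, hc⟩, hsub⟩; exact ⟨hsub, hc⟩
    calc ∑ v : W, (G.degree v).choose t
        = ∑ v : W, ∑ T ∈ (Finset.univ : Finset W).powersetCard t,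
            (if T ⊆ G.neighborFinset v then 1 else 0) := by
          apply Finset.sum_congr rfl; intro v _; rw [h1 v, Finset.card_filter]
      _ = ∑ T ∈ (Finset.univ : Finset W).powersetCard t, ∑ v : W,
            (if T ⊆ G.neighborFinset v then 1 else 0) := Finset.sum_comm
      _ = _ := by
          apply Finset.sum_congr rfl; intro T _; rw [Finset.card_filter]
  -- find T with many common neighbors
  have hex : ∃ T ∈ (Finset.univ : Finset W).powersetCard t,
      t ≤ (Finset.univ.filter (fun v => T ⊆ G.neighborFinset v)).card := by
    by_contra hcon
    push_neg at hcon
    have hbd : ∀ T ∈ (Finset.univ : Finset W).powersetCard t,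
        (Finset.univ.filter (fun v => T ⊆ G.neighborFinset v)).card ≤ t - 1 := by
      intro T hT; have := hcon T hT; omega
    have hle := Finset.sum_le_card_nsmul _ _ (t-1) hbd
    rw [Finset.card_powersetCard, Finset.card_univ, smul_eq_mul] at hle
    rw [key] at h
    rw [Nat.mul_comm] at hle
    omega
  obtain ⟨T, hT, hTcount⟩ := hex
  have hTcard : T.card = t := (Finset.mem_powersetCard.mp hT).2
  obtain ⟨Y, hYsub, hYcard⟩ := Finset.exists_subset_card_eq hTcount
  refine ⟨T, Y, hTcard, hYcard, ?_, ?_⟩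
  · rw [Finset.disjoint_left]
    intro a haT haY
    have := (Finset.mem_filter.mp (hYsub haY)).2 haT
    rw [SimpleGraph.mem_neighborFinset] at this
    exact G.loopless.irrefl a this
  · intro x hx y hy
    have := (Finset.mem_filter.mp (hYsub hy)).2 hx
    rw [SimpleGraph.mem_neighborFinset] at this
    exact this.symm

lemma highdeg_count (G : SimpleGraph W) (D M : ℕ) (hn : 0 < Fintype.card W)
    (h : Fintype.card W * D + Fintype.card W * M ≤ ∑ v : W, G.degree v) :
    M ≤ (Finset.univ.filter (fun v => D ≤ G.degree v)).card := by
  classical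
  set A := Finset.univ.filter (fun v => D ≤ G.degree v) with hA
  have hsplit : ∑ v : W, G.degree v = ∑ v ∈ A, G.degree v + ∑ v ∈ Aᶜ, G.degree v :=
    (Finset.sum_add_sum_compl A _).symm
  have h1 : ∑ v ∈ A, G.degree v ≤ A.card * Fintype.card W := by
    apply Finset.sum_le_card_nsmul
    intro v _
    exact le_of_lt (G.degree_lt_card_verts v)
  have h2 : ∑ v ∈ Aᶜ, G.degree v ≤ Fintype.card W * D := by
    calc ∑ v ∈ Aᶜ, G.degree v ≤ Aᶜ.card * D := by
          apply Finset.sum_le_card_nsmul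
          intro v hv
          simp only [hA, Finset.mem_compl, Finset.mem_filter, Finset.mem_univ, true_and,
            not_le] at hv
          omega
      _ ≤ Fintype.card W * D :=
          Nat.mul_le_mul_right _ (le_trans (Finset.card_le_card (Finset.subset_univ _))
            (le_of_eq Finset.card_univ))
  have hMn : Fintype.card W * M ≤ A.card * Fintype.card W := by omega
  rw [Nat.mul_comm A.card] at hMn
  exact Nat.le_of_mul_le_mul_left hMn hn

lemma kst_main (G : SimpleGraph W) (t D M : ℕ) (ht : 1 ≤ t) (hn : 0 < Fintype.card W)
    (hpig : (t-1) * (Fintype.card W).choose t < M * D.choose t)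
    (hdeg : Fintype.card W * D + Fintype.card W * M ≤ 2 * G.edgeFinset.card) :
    ∃ X Y : Finset W, X.card = t ∧ Y.card = t ∧ Disjoint X Y ∧
      ∀ x ∈ X, ∀ y ∈ Y, G.Adj x y := by
  classical
  apply kst_pigeon G t ht
  have hsum : Fintype.card W * D + Fintype.card W * M ≤ ∑ v : W, G.degree v := by
    rwa [SimpleGraph.sum_degrees_eq_twice_card_edges]
  have hM := highdeg_count G D M hn hsum
  have hstep : (Finset.univ.filter (fun v => D ≤ G.degree v)).card * D.choose t
      ≤ ∑ v : W, (G.degree v).choose t := by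
    calc (Finset.univ.filter (fun v => D ≤ G.degree v)).card * D.choose t
        ≤ ∑ v ∈ Finset.univ.filter (fun v => D ≤ G.degree v), (G.degree v).choose t := by
          rw [← smul_eq_mul]
          apply Finset.card_nsmul_le_sum
          intro v hv
          exact Nat.choose_le_choose t (Finset.mem_filter.mp hv).2
      _ ≤ ∑ v : W, (G.degree v).choose t :=
          Finset.sum_le_sum_of_subset (Finset.subset_univ _)
  calc (t-1) * (Fintype.card W).choose t < M * D.choose t := hpig
    _ ≤ (Finset.univ.filter (fun v => D ≤ G.degree v)).card * D.choose t :=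
        Nat.mul_le_mul_right _ hM
    _ ≤ ∑ v : W, (G.degree v).choose t := hstep





def yesG (Γ : SimpleGraph W) (L : ℕ) : SimpleGraph W where
  Adj p q := p ≠ q ∧ ∃ P : Γ.Walk p q, P.IsPath ∧ P.length = L
  symm := by
    refine ⟨?_⟩
    rintro p q ⟨hne, P, hP, hL⟩
    exact ⟨hne.symm, P.reverse, hP.reverse, by simp [hL]⟩
  loopless := ⟨by rintro p ⟨hne, _⟩; exact hne rfl⟩

def badG (Γ : SimpleGraph W) (L : ℕ) : SimpleGraph W where
  Adj p q := Γ.Adj p q ∧ ¬∃ P : Γ.Walk p q, P.IsPath ∧ P.length = L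
  symm := by
    refine ⟨?_⟩
    rintro p q ⟨hadj, hno⟩
    refine ⟨hadj.symm, ?_⟩
    rintro ⟨P, hP, hL⟩
    exact hno ⟨P.reverse, hP.reverse, by simp [hL]⟩
  loopless := ⟨by rintro p ⟨hadj, _⟩; exact Γ.loopless.irrefl p hadj⟩

def goodG (Γ : SimpleGraph W) (L : ℕ) : SimpleGraph W where
  Adj p q := Γ.Adj p q ∧ ∃ P : Γ.Walk p q, P.IsPath ∧ P.length = L
  symm := by
    refine ⟨?_⟩
    rintro p q ⟨hadj, P, hP, hL⟩
    exact ⟨hadj.symm, P.reverse, hP.reverse, by simp [hL]⟩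
  loopless := ⟨by rintro p ⟨hadj, _⟩; exact Γ.loopless.irrefl p hadj⟩

lemma good_le {Γ : SimpleGraph W} {L : ℕ} : goodG Γ L ≤ Γ := fun _ _ h => h.1
lemma bad_le {Γ : SimpleGraph W} {L : ℕ} : badG Γ L ≤ Γ := fun _ _ h => h.1

lemma eN_eq (G : SimpleGraph W) : G.edgeSet.ncard = G.edgeFinset.card := by
  rw [← SimpleGraph.coe_edgeFinset, Set.ncard_coe_finset]

lemma good_bad_card (Γ : SimpleGraph W) (L : ℕ) :
    (goodG Γ L).edgeSet.ncard + (badG Γ L).edgeSet.ncard = Γ.edgeSet.ncard := by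
  classical
  have hsup : goodG Γ L ⊔ badG Γ L = Γ := by
    ext p q
    simp only [SimpleGraph.sup_adj]
    constructor
    · rintro (h | h) <;> exact h.1
    · intro h
      by_cases hex : ∃ P : Γ.Walk p q, P.IsPath ∧ P.length = L
      · exact Or.inl ⟨h, hex⟩
      · exact Or.inr ⟨h, hex⟩
  have hdisj : Disjoint (goodG Γ L) (badG Γ L) := by
    rw [disjoint_iff]
    ext p q
    simp only [SimpleGraph.inf_adj, SimpleGraph.bot_adj]
    constructor
    · rintro ⟨⟨_, hex⟩, ⟨_, hnex⟩⟩
      exact (hnex hex)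
    · intro h; exact absurd h (by simp)
  have hds : Disjoint (goodG Γ L).edgeSet (badG Γ L).edgeSet :=
    (SimpleGraph.disjoint_edgeSet).mpr hdisj
  have hes : Γ.edgeSet = (goodG Γ L).edgeSet ∪ (badG Γ L).edgeSet := by
    rw [← SimpleGraph.edgeSet_sup, hsup]
  rw [hes, Set.ncard_union_eq hds (Set.toFinite _) (Set.toFinite _)]

/-- friendship paradox style bound -/
lemma friendship (G' Γ : SimpleGraph W) (hle : G' ≤ Γ) :
    (2 * G'.edgeSet.ncard : ℝ) ≤
      ∑ q : W, (((G'.neighborFinset q).sup (fun w => Γ.degree w) : ℕ) : ℝ) := by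
  classical
  let d : W → ℝ := fun v => (G'.degree v : ℝ)
  let msup : W → ℕ := fun q => (G'.neighborFinset q).sup (fun w => Γ.degree w)
  show (2 * G'.edgeSet.ncard : ℝ) ≤ ∑ q : W, ((msup q : ℕ) : ℝ)
  have hpos : ∀ q w, G'.Adj q w → (0 < d q ∧ 0 < d w) := by
    intro q w h
    constructor
    · have h1 : 0 < G'.degree q := by
        rw [SimpleGraph.degree_pos_iff_exists_adj]; exact ⟨w, h⟩
      show (0:ℝ) < (G'.degree q : ℝ)
      exact_mod_cast h1
    · have h1 : 0 < G'.degree w := by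
        rw [SimpleGraph.degree_pos_iff_exists_adj]; exact ⟨q, h.symm⟩
      show (0:ℝ) < (G'.degree w : ℝ)
      exact_mod_cast h1
  have hfilter : ∀ q : W, (Finset.univ.filter (fun w => G'.Adj q w)) = G'.neighborFinset q := by
    intro q; ext w; simp [SimpleGraph.mem_neighborFinset]
  -- the double sum
  have hsymm : (∑ q : W, ∑ w : W, (if G'.Adj q w then d w / d q else 0))
      = ∑ q : W, ∑ w : W, (if G'.Adj q w then d q / d w else 0) := by
    rw [Finset.sum_comm]
    apply Finset.sum_congr rfl; intro q _
    apply Finset.sum_congr rfl; intro w _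
    by_cases h : G'.Adj q w
    · rw [if_pos h, if_pos h.symm]
    · rw [if_neg h, if_neg (fun hc => h hc.symm)]
  have hdegsum : ∑ q : W, d q = 2 * G'.edgeSet.ncard := by
    show ∑ q : W, ((G'.degree q : ℕ) : ℝ) = _
    rw [← Nat.cast_sum, SimpleGraph.sum_degrees_eq_twice_card_edges, eN_eq]
    push_cast; ring
  have hkey : ∑ q : W, d q ≤ ∑ q : W, ∑ w : W, (if G'.Adj q w then d w / d q else 0) := by
    have hdouble : 2 * (∑ q : W, ∑ w : W, (if G'.Adj q w then d w / d q else 0))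
        = ∑ q : W, ∑ w : W,
            ((if G'.Adj q w then d w / d q else 0) + (if G'.Adj q w then d q / d w else 0)) := by
      rw [two_mul]
      nth_rewrite 2 [hsymm]
      rw [← Finset.sum_add_distrib]
      apply Finset.sum_congr rfl; intro q _
      rw [← Finset.sum_add_distrib]
    have hterm : ∀ q w : W, (if G'.Adj q w then (2:ℝ) else 0) ≤
        (if G'.Adj q w then d w / d q else 0) + (if G'.Adj q w then d q / d w else 0) := by
      intro q w
      by_cases h : G'.Adj q w
      · simp only [if_pos h]
        obtain ⟨hq, hw⟩ := hpos q w h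
        rw [div_add_div _ _ (ne_of_gt hq) (ne_of_gt hw), le_div_iff₀ (by positivity)]
        nlinarith [sq_nonneg (d w - d q)]
      · simp [if_neg h]
    have hsum2 : ∑ q : W, ∑ w : W, (if G'.Adj q w then (2:ℝ) else 0) = 2 * ∑ q : W, d q := by
      rw [Finset.mul_sum]
      apply Finset.sum_congr rfl; intro q _
      rw [← Finset.sum_filter, hfilter q, Finset.sum_const]
      show ((G'.neighborFinset q).card : ℕ) • (2:ℝ) = 2 * d q
      rw [SimpleGraph.card_neighborFinset_eq_degree, nsmul_eq_mul]
      show (G'.degree q : ℝ) * 2 = 2 * (G'.degree q : ℝ)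
      ring
    have : 2 * ∑ q : W, d q ≤ 2 * (∑ q : W, ∑ w : W, (if G'.Adj q w then d w / d q else 0)) := by
      rw [hdouble, ← hsum2]
      apply Finset.sum_le_sum; intro q _
      apply Finset.sum_le_sum; intro w _
      exact hterm q w
    linarith
  have hSle : ∑ q : W, ∑ w : W, (if G'.Adj q w then d w / d q else 0)
      ≤ ∑ q : W, ((msup q : ℕ) : ℝ) := by
    apply Finset.sum_le_sum
    intro q _
    rw [← Finset.sum_filter, hfilter q]
    by_cases hq : (G'.neighborFinset q).Nonempty
    · have hdq : 0 < d q := by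
        obtain ⟨w, hw⟩ := hq
        exact (hpos q w (by rwa [SimpleGraph.mem_neighborFinset] at hw)).1
      rw [← Finset.sum_div, div_le_iff₀ hdq]
      have hbound : ∀ w ∈ G'.neighborFinset q, d w ≤ ((msup q : ℕ) : ℝ) := by
        intro w hw
        have h1 : G'.degree w ≤ Γ.degree w := by
          apply Finset.card_le_card
          intro z hz
          rw [SimpleGraph.mem_neighborFinset] at hz ⊢
          exact hle hz
        have h2 : Γ.degree w ≤ msup q := Finset.le_sup (f := fun w => Γ.degree w) hw
        show ((G'.degree w : ℕ) : ℝ) ≤ _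
        exact_mod_cast le_trans h1 h2
      calc ∑ w ∈ G'.neighborFinset q, d w
          ≤ ∑ _w ∈ G'.neighborFinset q, ((msup q : ℕ) : ℝ) := Finset.sum_le_sum hbound
        _ = (G'.neighborFinset q).card * ((msup q : ℕ) : ℝ) := by
            rw [Finset.sum_const, nsmul_eq_mul]
        _ = ((msup q : ℕ) : ℝ) * d q := by
            rw [SimpleGraph.card_neighborFinset_eq_degree]
            show ((G'.degree q : ℕ) : ℝ) * _ = _ * ((G'.degree q : ℕ) : ℝ)
            ring
    · rw [Finset.not_nonempty_iff_eq_empty] at hq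
      rw [hq]
      simp
  calc (2 * G'.edgeSet.ncard : ℝ) = ∑ q : W, d q := hdegsum.symm
    _ ≤ _ := le_trans hkey hSle
lemma ext_count (Γ : SimpleGraph W) (j : ℕ) (hj : 1 ≤ j) (q : W) :
    ((goodG Γ (2*j-1)).neighborFinset q).sup (fun w => Γ.degree w)
      ≤ (yesG Γ (2*j)).degree q + 2*j := by
  classical
  by_cases hq : ((goodG Γ (2*j-1)).neighborFinset q).Nonempty
  · obtain ⟨w, hw, hsup⟩ := Finset.exists_mem_eq_sup _ hq (fun w => Γ.degree w)
    rw [hsup]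
    rw [SimpleGraph.mem_neighborFinset] at hw
    obtain ⟨hadj, P, hP, hlen⟩ := hw
    have hsuppcard : P.support.toFinset.card ≤ 2*j := by
      calc P.support.toFinset.card ≤ P.support.length := List.toFinset_card_le _
        _ = P.length + 1 := SimpleGraph.Walk.length_support _
        _ = 2*j := by omega
    have hsub : Γ.neighborFinset w \ P.support.toFinset ⊆ (yesG Γ (2*j)).neighborFinset q := by
      intro z hz
      rw [Finset.mem_sdiff, SimpleGraph.mem_neighborFinset] at hz
      obtain ⟨hzadj, hzsupp⟩ := hz
      rw [List.mem_toFinset] at hzsupp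
      rw [SimpleGraph.mem_neighborFinset]
      refine ⟨?_, P.concat hzadj, isPath_concat P hP hzadj hzsupp, ?_⟩
      · intro hzq
        exact hzsupp (hzq ▸ P.start_mem_support)
      · rw [SimpleGraph.Walk.length_concat, hlen]; omega
    have h1 : Γ.degree w ≤ (Γ.neighborFinset w \ P.support.toFinset).card
        + P.support.toFinset.card := by
      rw [← SimpleGraph.card_neighborFinset_eq_degree]
      exact Finset.card_le_card_sdiff_add_card
    calc Γ.degree w ≤ (Γ.neighborFinset w \ P.support.toFinset).card
          + P.support.toFinset.card := h1
      _ ≤ (yesG Γ (2*j)).degree q + 2*j := by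
          have := Finset.card_le_card hsub
          rw [← SimpleGraph.card_neighborFinset_eq_degree]
          omega
  · rw [Finset.not_nonempty_iff_eq_empty] at hq
    rw [hq]
    simp
lemma transfer_path {G G' : SimpleGraph W} (hle : G ≤ G') {p q : W} (P : G.Walk p q)
    (hP : P.IsPath) : ∃ P' : G'.Walk p q, P'.IsPath ∧ P'.length = P.length := by
  refine ⟨P.mapLe hle, ?_, ?_⟩
  · exact SimpleGraph.Walk.map_isPath_of_injective (fun a b hab => hab) hP
  · exact SimpleGraph.Walk.length_map _ _

lemma bad_no_kjj (Γ : SimpleGraph W) (j : ℕ) (hj : 1 ≤ j) :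
    ¬∃ X Y : Finset W, X.card = j ∧ Y.card = j ∧ Disjoint X Y ∧
      ∀ x ∈ X, ∀ y ∈ Y, (badG Γ (2*j-1)).Adj x y := by
  rintro ⟨X, Y, hX, hY, hdisj, hadj⟩
  have hXne : X.Nonempty := by rw [← Finset.card_pos, hX]; omega
  obtain ⟨x, hx⟩ := hXne
  obtain ⟨y, hy, P, hP, hlen, -⟩ := zigzag j hj X Y hX hY hdisj hadj x hx
  obtain ⟨P', hP', hlen'⟩ := transfer_path (bad_le (Γ := Γ) (L := 2*j-1)) P hP
  exact (hadj x hx y hy).2 ⟨P', hP', by omega⟩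



/-- The main counting lemma (L3): edges are nearly all "yes"-pairs. -/
lemma L3 (Γ : SimpleGraph W) (j D M : ℕ) (hj : 1 ≤ j) (hn : 0 < Fintype.card W)
    (hpig : (j-1) * (Fintype.card W).choose j < M * D.choose j) :
    2 * Γ.edgeSet.ncard ≤ 2 * (yesG Γ (2*j)).edgeSet.ncard + 2*j*(Fintype.card W)
      + (Fintype.card W * D + Fintype.card W * M) := by
  classical
  -- bad edges are few
  have hbad : 2 * (badG Γ (2*j-1)).edgeSet.ncard ≤ Fintype.card W * D + Fintype.card W * M := by
    by_contra hcon
    push_neg at hcon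
    rw [eN_eq] at hcon
    obtain ⟨X, Y, hX, hY, hdisj, hadj⟩ :=
      kst_main (badG Γ (2*j-1)) j D M hj hn hpig (le_of_lt hcon)
    exact bad_no_kjj Γ j hj ⟨X, Y, hX, hY, hdisj, hadj⟩
  -- good edges are yes-dominated
  have hgood : 2 * (goodG Γ (2*j-1)).edgeSet.ncard
      ≤ 2 * (yesG Γ (2*j)).edgeSet.ncard + 2*j*(Fintype.card W) := by
    have hfr := friendship (goodG Γ (2*j-1)) Γ good_le
    have hext : ∑ q : W, (((goodG Γ (2*j-1)).neighborFinset q).sup (fun w => Γ.degree w) : ℕ)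
        ≤ ∑ q : W, ((yesG Γ (2*j)).degree q + 2*j) := by
      apply Finset.sum_le_sum
      intro q _
      exact ext_count Γ j hj q
    have hsum : ∑ q : W, ((yesG Γ (2*j)).degree q + 2*j)
        = 2 * (yesG Γ (2*j)).edgeSet.ncard + 2*j*(Fintype.card W) := by
      rw [Finset.sum_add_distrib, Finset.sum_const, Finset.card_univ,
        SimpleGraph.sum_degrees_eq_twice_card_edges, eN_eq, smul_eq_mul]
      ring
    have hfr' : (2 * (goodG Γ (2*j-1)).edgeSet.ncard : ℝ)
        ≤ ((2 * (yesG Γ (2*j)).edgeSet.ncard + 2*j*(Fintype.card W) : ℕ) : ℝ) := by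
      calc (2 * (goodG Γ (2*j-1)).edgeSet.ncard : ℝ)
          ≤ ∑ q : W, ((((goodG Γ (2*j-1)).neighborFinset q).sup (fun w => Γ.degree w) : ℕ) : ℝ) := hfr
        _ = ((∑ q : W, (((goodG Γ (2*j-1)).neighborFinset q).sup (fun w => Γ.degree w) : ℕ) : ℕ) : ℝ) := by
            rw [Nat.cast_sum]
        _ ≤ _ := by
            have := le_trans hext (le_of_eq hsum)
            exact_mod_cast this
    exact_mod_cast hfr'
  have hpart := good_bad_card Γ (2*j-1)
  omega



lemma embed_lemma (ℓ : ℕ) (hℓ : 3 ≤ ℓ) (CR CB : SimpleGraph (ZMod ℓ))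
    (hunion : CR ⊔ CB = cycleG ℓ)
    (R B Pi : SimpleGraph W)
    (hPiR : CR ≠ ⊥ → Pi ≤ R) (hPiB : CB ≠ ⊥ → Pi ≤ B)
    (u : ZMod ℓ) (p q : W)
    (huR : CR.Adj u (u+1) → R.Adj q p) (huB : CB.Adj u (u+1) → B.Adj q p)
    (P : Pi.Walk p q) (hP : P.IsPath) (hlen : P.length = ℓ - 1) :
    ∃ φ : ZMod ℓ ↪ W, (∀ a b, CR.Adj a b → R.Adj (φ a) (φ b)) ∧
      (∀ a b, CB.Adj a b → B.Adj (φ a) (φ b)) := by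
  classical
  obtain ⟨m, rfl⟩ : ∃ m, ℓ = m + 1 := ⟨ℓ - 1, by omega⟩
  haveI : NeZero (m+1) := ⟨by omega⟩
  haveI : Fact (1 < m+1) := ⟨by omega⟩
  have hlen' : P.length = m := by omega
  set φf : ZMod (m+1) → W := fun i => P.getVert ((i - (u+1)).val) with hφf
  have hvallt : ∀ i : ZMod (m+1), (i - (u+1)).val < m+1 := fun i => ZMod.val_lt _
  -- injectivity
  have hinj : Function.Injective φf := by
    intro i j hij
    simp only [hφf] at hij
    have h1 : (i - (u+1)).val ≤ P.length := by rw [hlen']; have := hvallt i; omega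
    have h2 : (j - (u+1)).val ≤ P.length := by rw [hlen']; have := hvallt j; omega
    have := getVert_inj P hP _ h1 _ h2 hij
    have hval : (i - (u+1)) = (j - (u+1)) := by
      apply ZMod.val_injective
      exact this
    have : i - (u+1) + (u+1) = j - (u+1) + (u+1) := by rw [hval]
    simpa using this
  -- special values
  have hphi_u1 : φf (u+1) = p := by
    simp only [hφf, sub_self, ZMod.val_zero, SimpleGraph.Walk.getVert_zero]
  have hphi_u : φf u = q := by
    have h1 : u - (u+1) = (-1 : ZMod (m+1)) := by ring
    simp only [hφf, h1, ZMod.val_neg_one]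
    rw [← hlen']
    exact P.getVert_length
  -- step adjacency
  have hstep : ∀ a : ZMod (m+1), a ≠ u → Pi.Adj (φf a) (φf (a+1)) := by
    intro a ha
    have hk : (a - (u+1)).val ≠ m := by
      intro hc
      apply ha
      have h1 : a - (u+1) = (-1 : ZMod (m+1)) := by
        apply ZMod.val_injective
        rw [hc, ZMod.val_neg_one]
      have h2 : a - (u+1) + (u+1) = (-1 : ZMod (m+1)) + (u+1) := by rw [h1]
      simp only [sub_add_cancel] at h2
      rw [h2]; ring
    have hklt : (a - (u+1)).val < m := by
      have := hvallt a; omega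
    have hsucc : (a + 1 - (u+1)).val = (a - (u+1)).val + 1 := by
      have h1 : a + 1 - (u+1) = (a - (u+1)) + 1 := by ring
      rw [h1, ZMod.val_add, ZMod.val_one, Nat.mod_eq_of_lt (by omega)]
    simp only [hφf, hsucc]
    apply P.adj_getVert_succ
    rw [hlen']
    omega
  -- color handling
  have hcyc : ∀ a b : ZMod (m+1), CR.Adj a b ∨ CB.Adj a b → a ≠ b ∧ (b = a + 1 ∨ a = b + 1) := by
    intro a b h
    have : (CR ⊔ CB).Adj a b := by
      rcases h with h | h
      · exact Or.inl h
      · exact Or.inr h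
    rw [hunion] at this
    rw [cycleG, SimpleGraph.fromRel_adj] at this
    exact this
  refine ⟨⟨φf, hinj⟩, ?_, ?_⟩
  · -- red edges
    have main : ∀ a b : ZMod (m+1), CR.Adj a b → b = a + 1 → R.Adj (φf a) (φf b) := by
      intro a b h hb
      subst hb
      by_cases ha : a = u
      · subst ha
        rw [hphi_u, hphi_u1]
        exact huR h
      · exact hPiR (fun hbot => by rw [hbot] at h; exact h) (hstep a ha)
    intro a b h
    rcases (hcyc a b (Or.inl h)).2 with hb | hb
    · exact main a b h hb
    · exact (main b a h.symm hb).symm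
  · -- blue edges
    have main : ∀ a b : ZMod (m+1), CB.Adj a b → b = a + 1 → B.Adj (φf a) (φf b) := by
      intro a b h hb
      subst hb
      by_cases ha : a = u
      · subst ha
        rw [hphi_u, hphi_u1]
        exact huB h
      · exact hPiB (fun hbot => by rw [hbot] at h; exact h) (hstep a ha)
    intro a b h
    rcases (hcyc a b (Or.inr h)).2 with hb | hb
    · exact main a b h hb
    · exact (main b a h.symm hb).symm


lemma edges_le_top (G : SimpleGraph W) : G.edgeSet.ncard ≤ (Fintype.card W).choose 2 := by
  classical
  rw [eN_eq, ← SimpleGraph.card_edgeFinset_top_eq_card_choose_two]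
  apply Finset.card_le_card
  apply SimpleGraph.edgeFinset_mono
  exact le_top

lemma sup_inf_card (X Y : SimpleGraph W) :
    (X ⊔ Y).edgeSet.ncard + (X ⊓ Y).edgeSet.ncard = X.edgeSet.ncard + Y.edgeSet.ncard := by
  classical
  rw [SimpleGraph.edgeSet_sup, SimpleGraph.edgeSet_inf]
  exact Set.ncard_union_add_ncard_inter _ _ (Set.toFinite _) (Set.toFinite _)

/-- odd core: some color edge pq is linked by a (2j)-path in the intersection graph -/
lemma core_odd (j D M : ℕ) (hj : 1 ≤ j) (hn : 0 < Fintype.card W)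
    (X Y : SimpleGraph W)
    (hpig : (j-1) * (Fintype.card W).choose j < M * D.choose j)
    (hcount : 2 * ((Fintype.card W).choose 2) + 2*j*(Fintype.card W)
        + (Fintype.card W * D + Fintype.card W * M)
        < 2 * (X.edgeSet.ncard + Y.edgeSet.ncard)) :
    (∃ p q, X.Adj p q ∧ (yesG (X ⊓ Y) (2*j)).Adj p q) ∨
    (∃ p q, Y.Adj p q ∧ (yesG (X ⊓ Y) (2*j)).Adj p q) := by
  classical
  by_contra hcon
  push_neg at hcon
  obtain ⟨hconX, hconY⟩ := hcon
  -- yes graph disjoint from X ⊔ Y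
  have hdisj : Disjoint (yesG (X ⊓ Y) (2*j)) (X ⊔ Y) := by
    rw [disjoint_iff]
    ext p q
    simp only [SimpleGraph.inf_adj, SimpleGraph.sup_adj, SimpleGraph.bot_adj]
    constructor
    · rintro ⟨hyes, hX | hY⟩
      · exact hconX p q hX hyes
      · exact hconY p q hY hyes
    · intro h; exact absurd h (by simp)
  have hsum : (yesG (X ⊓ Y) (2*j)).edgeSet.ncard + (X ⊔ Y).edgeSet.ncard
      ≤ (Fintype.card W).choose 2 := by
    have hds : Disjoint (yesG (X ⊓ Y) (2*j)).edgeSet (X ⊔ Y).edgeSet :=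
      (SimpleGraph.disjoint_edgeSet).mpr hdisj
    calc (yesG (X ⊓ Y) (2*j)).edgeSet.ncard + (X ⊔ Y).edgeSet.ncard
        = ((yesG (X ⊓ Y) (2*j)) ⊔ (X ⊔ Y)).edgeSet.ncard := by
          conv_rhs => rw [SimpleGraph.edgeSet_sup]
          rw [Set.ncard_union_eq hds (Set.toFinite _) (Set.toFinite _)]
      _ ≤ (Fintype.card W).choose 2 := edges_le_top _
  have hL3 := L3 (X ⊓ Y) j D M hj hn hpig
  have hsi := sup_inf_card X Y
  omega

/-- even core: a G-edge linked by a (2t-1)-path in G itself -/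
lemma core_even (t D M : ℕ) (ht : 1 ≤ t) (hn : 0 < Fintype.card W) (G : SimpleGraph W)
    (hpig : (t-1) * (Fintype.card W).choose t < M * D.choose t)
    (hdeg : Fintype.card W * D + Fintype.card W * M ≤ 2 * G.edgeSet.ncard) :
    ∃ p q, G.Adj q p ∧ ∃ P : G.Walk p q, P.IsPath ∧ P.length = 2*t - 1 := by
  classical
  rw [eN_eq] at hdeg
  obtain ⟨Xs, Ys, hXc, hYc, hdisj, hadj⟩ := kst_main G t D M ht hn hpig hdeg
  have hXne : Xs.Nonempty := by rw [← Finset.card_pos, hXc]; omega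
  obtain ⟨x, hx⟩ := hXne
  obtain ⟨y, hy, P, hP, hlen, -⟩ := zigzag t ht Xs Ys hXc hYc hdisj hadj x hx
  exact ⟨x, y, (hadj x hx y hy).symm, P, hP, hlen⟩

end Infra

lemma pig_numeric (j K n : ℕ) (hj : 1 ≤ j) (hK : 4 ≤ K)
    (hn : (j+2) * (4*K)^(j+2) ≤ n) :
    (j-1) * n.choose j < (n/K) * (n/K).choose j := by
  have hKpos : 0 < K := by omega
  set d := n / K with hd
  have hd1 : (j+2) * 4 * (4*K)^(j+1) ≤ d := by
    rw [hd, Nat.le_div_iff_mul_le hKpos]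
    calc (j+2) * 4 * (4*K)^(j+1) * K = (j+2) * ((4*K)^(j+1) * (4 * K)) := by ring
      _ = (j+2) * (4*K)^(j+2) := by rw [← pow_succ]
      _ ≤ n := hn
  have hdj : 2*j + 2 ≤ d := by
    have h1 : (4*K)^(j+1) ≥ 1 := Nat.one_le_pow _ _ (by omega)
    nlinarith
  have hn2d : n ≤ 2 * K * d := by
    have h1 := Nat.div_add_mod n K
    have h2 : n % K < K := Nat.mod_lt _ hKpos
    have h3 : 1 ≤ d := by omega
    have h4 : K ≤ K * d := Nat.le_mul_of_pos_right K h3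
    calc n = K * d + n % K := by rw [hd]; omega
      _ ≤ K * d + K := by omega
      _ ≤ K * d + K * d := by omega
      _ = 2 * K * d := by ring
  have cast_ineq : (((j-1) * n.choose j : ℕ) : ℝ) < (((n/K) * (n/K).choose j : ℕ) : ℝ) := by
    rw [Nat.cast_mul, Nat.cast_mul, Nat.cast_sub hj, ← hd]
    norm_num
    have hub : (n.choose j : ℝ) ≤ (n:ℝ)^j / (j.factorial : ℝ) := Nat.choose_le_pow_div j n
    have hlb : (((d + 1 - j : ℕ))^j : ℝ) / (j.factorial : ℝ) ≤ (d.choose j : ℝ) := by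
      exact_mod_cast Nat.pow_le_choose j d
    have hfac : (0:ℝ) < (j.factorial : ℝ) := by exact_mod_cast j.factorial_pos
    have hd1j : (d:ℝ)/2 ≤ ((d + 1 - j : ℕ) : ℝ) := by
      have h5 : d/2 + 1 ≤ d + 1 - j := by omega
      have h6 := Nat.div_add_mod d 2
      have h7 : d % 2 < 2 := Nat.mod_lt _ (by norm_num)
      have h8 : (d:ℝ) ≤ 2 * ((d/2 : ℕ):ℝ) + 1 := by
        have : d ≤ 2 * (d/2) + 1 := by omega
        exact_mod_cast this
      have h9 : ((d/2 + 1 : ℕ):ℝ) ≤ ((d + 1 - j : ℕ) : ℝ) := by exact_mod_cast h5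
      push_cast at h9 ⊢
      nlinarith
    have hdpos : (0:ℝ) < d := by
      have : 0 < d := by omega
      exact_mod_cast this
    have hjR1 : (1:ℝ) ≤ (j:ℝ) := by exact_mod_cast hj
    -- key numeric inequality
    have key : ((j:ℝ)-1) * (n:ℝ)^j < (d:ℝ) * ((d:ℝ)/2)^j := by
      have hn2d' : (n:ℝ) ≤ 2*K*d := by exact_mod_cast hn2d
      have h1 : (n:ℝ)^j ≤ (2*(K:ℝ)*d)^j := pow_le_pow_left₀ (by positivity) hn2d' j
      have h2 : ((2:ℝ)*K*d)^j = (4*K)^j * ((d:ℝ)/2)^j := by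
        rw [← mul_pow]
        congr 1
        ring
      have hpowpos : (0:ℝ) < (4*(K:ℝ))^j := by positivity
      have hpow1pos : (0:ℝ) < (4*(K:ℝ))^(j+1) := by positivity
      have h4 : ((j:ℝ)-1) * (4*K)^j < (d:ℝ) := by
        have hd1' : ((j:ℝ)+2) * 4 * (4*K)^(j+1) ≤ d := by exact_mod_cast hd1
        have hpow : ((4:ℝ)*K)^j ≤ (4*K)^(j+1) := by
          apply pow_le_pow_right₀ ?_ (by omega)
          have : (4:ℝ) ≤ (K:ℝ) := by exact_mod_cast hK
          nlinarith
        calc ((j:ℝ)-1) * (4*K)^j < ((j:ℝ)+2) * (4*K)^j := by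
              apply mul_lt_mul_of_pos_right (by linarith) hpowpos
          _ ≤ ((j:ℝ)+2) * (4*K)^(j+1) :=
              mul_le_mul_of_nonneg_left hpow (by linarith)
          _ ≤ ((j:ℝ)+2) * 4 * (4*K)^(j+1) := by nlinarith
          _ ≤ d := hd1'
      calc ((j:ℝ)-1) * (n:ℝ)^j ≤ ((j:ℝ)-1) * ((4*K)^j * ((d:ℝ)/2)^j) := by
            apply mul_le_mul_of_nonneg_left _ (by linarith)
            rw [← h2]; exact h1
        _ = ((j:ℝ)-1) * (4*K)^j * ((d:ℝ)/2)^j := by ring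
        _ < (d:ℝ) * ((d:ℝ)/2)^j := mul_lt_mul_of_pos_right h4 (by positivity)
    -- assemble
    calc ((j:ℝ)-1) * (n.choose j : ℝ)
        ≤ ((j:ℝ)-1) * ((n:ℝ)^j / j.factorial) :=
          mul_le_mul_of_nonneg_left hub (by linarith)
      _ = (((j:ℝ)-1) * (n:ℝ)^j) / j.factorial := by ring
      _ < ((d:ℝ) * ((d:ℝ)/2)^j) / j.factorial := by
          apply div_lt_div_of_pos_right key hfac
      _ = (d:ℝ) * (((d:ℝ)/2)^j / j.factorial) := by ring
      _ ≤ (d:ℝ) * (((d + 1 - j : ℕ):ℝ)^j / j.factorial) := by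
          apply mul_le_mul_of_nonneg_left _ (le_of_lt hdpos)
          gcongr
      _ ≤ (d:ℝ) * (d.choose j : ℝ) := mul_le_mul_of_nonneg_left hlb (le_of_lt hdpos)
  exact_mod_cast cast_ineq


/-- Theorem 1.2: for any bicolored cycle `(CR, CB)` of length `ℓ ≥ 3`, if both `R` and `B`
have density at least `1/2 + ε`, then the bicolored cycle embeds in the colored union. -/
theorem mex_bicolored_cycle (ℓ : ℕ) (hℓ : 3 ≤ ℓ)
    (CR CB : SimpleGraph (ZMod ℓ))
    (hdisj : ∀ u v, ¬(CR.Adj u v ∧ CB.Adj u v))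
    (hunion : CR ⊔ CB = cycleG ℓ)
    (ε : ℝ) (hε : 0 < ε) :
    ∃ n₀ : ℕ, ∀ n ≥ n₀, ∀ (W : Type) [Fintype W], Fintype.card W = n →
      ∀ R B : SimpleGraph W,
        (1/2 + ε) * (n*(n-1)/2) ≤ (R.edgeSet.ncard : ℝ) →
        (1/2 + ε) * (n*(n-1)/2) ≤ (B.edgeSet.ncard : ℝ) →
        ∃ φ : ZMod ℓ ↪ W,
          (∀ u v, CR.Adj u v → R.Adj (φ u) (φ v)) ∧
          (∀ u v, CB.Adj u v → B.Adj (φ u) (φ v)) := by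
  classical
  obtain ⟨K0, hK0⟩ := exists_nat_gt (4/ε)
  set K := K0 + 4 with hKdef
  have hK4 : 4 ≤ K := by omega
  have hKε : (4:ℝ) ≤ ε * K := by
    have h1 : (4:ℝ)/ε < K0 := hK0
    have h2 : (K0:ℝ) ≤ K := by exact_mod_cast Nat.le_add_right K0 4
    have h3 : (4:ℝ)/ε < K := lt_of_lt_of_le h1 h2
    calc (4:ℝ) = ε * (4/ε) := by field_simp
      _ ≤ ε * K := by nlinarith
  set j := ℓ / 2 with hjdef
  have hj : 1 ≤ j := by omega
  refine ⟨(j+2) * (4*K)^(j+2) + 4*j*K + 4, ?_⟩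
  intro n hn W _ hcard R B hR hB
  have hnn : (j+2) * (4*K)^(j+2) + 4*j*K + 4 ≤ n := hn
  have hn4 : 4 ≤ n := by omega
  have hnpos : 0 < Fintype.card W := by omega
  -- basic numbers
  set D := n / K with hDdef
  have hpig : (j-1) * (Fintype.card W).choose j < D * D.choose j := by
    rw [hcard, hDdef]
    exact pig_numeric j K n hj hK4 (by omega)
  have hCcast : ((n.choose 2 : ℕ) : ℝ) = (n:ℝ)*((n:ℝ)-1)/2 := Nat.cast_choose_two ℝ n
  have hDcast : (D:ℝ) ≤ ε * n / 4 := by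
    have h1 : ((D:ℕ):ℝ) ≤ (n:ℝ)/(K:ℝ) := Nat.cast_div_le
    have hKpos : (0:ℝ) < K := by positivity
    have h2 : (n:ℝ)/(K:ℝ) ≤ ε * n / 4 := by
      rw [div_le_div_iff₀ hKpos (by norm_num)]
      have hn0 : (0:ℝ) ≤ n := Nat.cast_nonneg n
      nlinarith
    linarith
  -- the common count bound for the odd case
  have hcount : ∀ e1 e2 : ℕ, (1/2 + ε) * ((n:ℝ)*((n:ℝ)-1)/2) ≤ e1 →
      (1/2 + ε) * ((n:ℝ)*((n:ℝ)-1)/2) ≤ e2 →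
      2 * ((Fintype.card W).choose 2) + 2*j*(Fintype.card W)
        + (Fintype.card W * D + Fintype.card W * D) < 2 * (e1 + e2) := by
    intro e1 e2 h1 h2
    rw [hcard]
    have hcast : ((2 * (n.choose 2) + 2*j*n + (n * D + n * D) : ℕ) : ℝ)
        < ((2 * (e1 + e2) : ℕ) : ℝ) := by
      push_cast
      rw [hCcast]
      have hnR : (4:ℝ) ≤ n := by exact_mod_cast hn4
      have hjKn : 4*(j:ℝ)*K + 4 ≤ n := by
        have h0 : 4*j*K + 4 ≤ n := by omega
        exact_mod_cast h0
      have hKpos : (0:ℝ) < K := by positivity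
      have hjpos : (0:ℝ) < j := by exact_mod_cast hj
      have hnpos' : (0:ℝ) < n := by exact_mod_cast (by omega : 0 < n)
      have hnR : (4:ℝ) ≤ n := by exact_mod_cast hn4
      have h5 : (4:ℝ) * n ≤ ε * K * n := by nlinarith
      have h6 : ε * K * n > 4 * (j:ℝ) * K := by nlinarith
      have h7 : ε * n > 4 * (j:ℝ) := by nlinarith
      have hjn : 2*(j:ℝ)*n < ε * n * n / 2 := by nlinarith
      have hD2 : 2*(n:ℝ)*D ≤ ε * n * n / 2 := by nlinarith
      have he12 : (e1:ℝ) + e2 ≥ (1 + 2*ε) * ((n:ℝ)*((n:ℝ)-1)/2) := by nlinarith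
      have hgap : ε * (n:ℝ) * n ≤ 2 * ε * ((n:ℝ)*((n:ℝ)-1)) := by nlinarith
      nlinarith
    exact_mod_cast hcast
  by_cases hpar : ℓ % 2 = 0
  · -- even case
    have hG : (((R ⊓ B).edgeSet.ncard : ℝ)) ≥ ε * n * (n-1) := by
      have hsi := sup_inf_card R B
      have htop := edges_le_top (R ⊔ B)
      rw [hcard] at htop
      have hcast : ((R ⊔ B).edgeSet.ncard : ℝ) + ((R ⊓ B).edgeSet.ncard : ℝ)
          = (R.edgeSet.ncard : ℝ) + (B.edgeSet.ncard : ℝ) := by exact_mod_cast hsi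
      have htopc : ((R ⊔ B).edgeSet.ncard : ℝ) ≤ (n:ℝ)*((n:ℝ)-1)/2 := by
        rw [← hCcast]; exact_mod_cast htop
      nlinarith
    have hdeg : Fintype.card W * D + Fintype.card W * D ≤ 2 * (R ⊓ B).edgeSet.ncard := by
      rw [hcard]
      have hcast : ((n * D + n * D : ℕ):ℝ) ≤ ((2 * (R ⊓ B).edgeSet.ncard : ℕ) : ℝ) := by
        push_cast
        have hn0 : (0:ℝ) ≤ n := Nat.cast_nonneg n
        have hnR : (4:ℝ) ≤ n := by exact_mod_cast hn4
        nlinarith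
      exact_mod_cast hcast
    obtain ⟨p, q, hpq, P, hP, hlen⟩ := core_even j D D hj hnpos (R ⊓ B) hpig hdeg
    have hlen' : P.length = ℓ - 1 := by rw [hlen]; omega
    exact embed_lemma ℓ hℓ CR CB hunion R B (R ⊓ B)
      (fun _ => inf_le_left) (fun _ => inf_le_right) 0 p q
      (fun _ => hpq.1) (fun _ => hpq.2) P hP hlen'
  · -- odd case
    have hodd : ℓ = 2*j + 1 := by omega
    haveI : Fact (1 < ℓ) := ⟨by omega⟩
    have getu : ∀ (C : SimpleGraph (ZMod ℓ)), C ≠ ⊥ →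
        (∀ a b, C.Adj a b → (cycleG ℓ).Adj a b) → ∃ u, C.Adj u (u+1) := by
      intro C hne hsub
      have hex : ∃ a b, C.Adj a b := by
        by_contra hc
        push_neg at hc
        apply hne
        ext a b
        simp only [SimpleGraph.bot_adj, iff_false]
        exact hc a b
      obtain ⟨a, b, hab⟩ := hex
      have hcyc := hsub a b hab
      rw [cycleG, SimpleGraph.fromRel_adj] at hcyc
      rcases hcyc.2 with h | h
      · exact ⟨a, h ▸ hab⟩
      · exact ⟨b, h ▸ hab.symm⟩
    have hsubR : ∀ a b, CR.Adj a b → (cycleG ℓ).Adj a b := by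
      intro a b h
      rw [← hunion]
      exact Or.inl h
    have hsubB : ∀ a b, CB.Adj a b → (cycleG ℓ).Adj a b := by
      intro a b h
      rw [← hunion]
      exact Or.inr h
    by_cases hCB : CB = ⊥
    · -- monochromatic red
      have hres := core_odd j D D hj hnpos R R hpig (hcount _ _ hR hR)
      have hconf : ∃ p q, R.Adj p q ∧ (yesG (R ⊓ R) (2*j)).Adj p q := by
        rcases hres with h | h <;> exact h
      obtain ⟨p, q, hpq, hyes⟩ := hconf
      rw [inf_idem] at hyes
      obtain ⟨hne, P, hP, hlen⟩ := hyes
      have hlen' : P.length = ℓ - 1 := by omega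
      refine embed_lemma ℓ hℓ CR CB hunion R B R (fun _ => le_refl R)
        (fun hne' => absurd hCB hne') 0 p q (fun _ => hpq.symm) ?_ P hP hlen'
      intro hadj
      rw [hCB] at hadj
      simp at hadj
    · by_cases hCR : CR = ⊥
      · -- monochromatic blue
        have hres := core_odd j D D hj hnpos B B hpig (hcount _ _ hB hB)
        have hconf : ∃ p q, B.Adj p q ∧ (yesG (B ⊓ B) (2*j)).Adj p q := by
          rcases hres with h | h <;> exact h
        obtain ⟨p, q, hpq, hyes⟩ := hconf
        rw [inf_idem] at hyes
        obtain ⟨hne, P, hP, hlen⟩ := hyes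
        have hlen' : P.length = ℓ - 1 := by omega
        refine embed_lemma ℓ hℓ CR CB hunion R B B (fun hne' => absurd hCR hne')
          (fun _ => le_refl B) 0 p q ?_ (fun _ => hpq.symm) P hP hlen'
        intro hadj
        rw [hCR] at hadj
        simp at hadj
      · -- mixed
        obtain ⟨uR, huRadj⟩ := getu CR hCR hsubR
        obtain ⟨uB, huBadj⟩ := getu CB hCB hsubB
        rcases core_odd j D D hj hnpos R B hpig (hcount _ _ hR hB) with
          ⟨p, q, hpq, hyes⟩ | ⟨p, q, hpq, hyes⟩
        · obtain ⟨hne, P, hP, hlen⟩ := hyes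
          have hlen' : P.length = ℓ - 1 := by omega
          refine embed_lemma ℓ hℓ CR CB hunion R B (R ⊓ B) (fun _ => inf_le_left)
            (fun _ => inf_le_right) uR p q (fun _ => hpq.symm) ?_ P hP hlen'
          intro hadj
          exact absurd ⟨huRadj, hadj⟩ (hdisj _ _)
        · obtain ⟨hne, P, hP, hlen⟩ := hyes
          have hlen' : P.length = ℓ - 1 := by omega
          refine embed_lemma ℓ hℓ CR CB hunion R B (R ⊓ B) (fun _ => inf_le_left)
            (fun _ => inf_le_right) uB p q ?_ (fun _ => hpq.symm) P hP hlen'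
          intro hadj
          exact absurd ⟨hadj, huBadj⟩ (hdisj _ _)
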